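/- Let Q be a set of points in the Euclidean plane ℝ², let r > 0, and let c be a point with Q ⊆ closedBall(c,r). Suppose x is a point of the r-circular hull of Q (i.e., x belongs to every closed disk of radius r containing Q) with dist(x,c) = r, and let x' = 2c − x be the antipodal point of x on the circle of radius r centered at c. Then: (i) x' lies on the topological frontier of the r-coverage CR_r(Q); and (ii) for every point c' with Q ⊆ closedBall(c',r) and x' ∈ closedBall(c',r), one has c' = c. -/

import Mathlib

theorem stmt_6 (Q : Set (EuclideanSpace ℝ (Fin 2))) (r : ℝ) (hr : 0 < r)
    (c x x' : EuclideanSpace ℝ (Fin 2))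
    (hQc : Q ⊆ Metric.closedBall c r)
    (hx : ∀ c', Q ⊆ Metric.closedBall c' r → x ∈ Metric.closedBall c' r)
    (hxc : dist x c = r) (hx' : x' = (2 : ℝ) • c - x) :
    x' ∈ frontier {z : EuclideanSpace ℝ (Fin 2) |
        ∃ c', Q ⊆ Metric.closedBall c' r ∧ z ∈ Metric.closedBall c' r} ∧
    ∀ c', Q ⊆ Metric.closedBall c' r → x' ∈ Metric.closedBall c' r → c' = c := by
  have hxx' : dist x x' = 2 * r := by
    rw [hx', dist_eq_norm]
    have : x - ((2 : ℝ) • c - x) = (2 : ℝ) • (x - c) := by module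
    rw [this, norm_smul]
    simp [← dist_eq_norm, hxc]
  have hx'c : dist x' c = r := by
    rw [hx', dist_eq_norm, show (2:ℝ) • c - x - c = c - x by module, ← dist_eq_norm,
      dist_comm, hxc]
  have hmid : midpoint ℝ x x' = c := by
    have : x + x' = (2 : ℝ) • c := by rw [hx']; module
    rw [midpoint_eq_smul_add, this, smul_smul]
    norm_num
  have huniq : ∀ c', Q ⊆ Metric.closedBall c' r → x' ∈ Metric.closedBall c' r → c' = c := by
    intro c' hQ hx'c'
    have h1 : dist x c' ≤ r := hx c' hQ
    have h2 : dist x' c' ≤ r := hx'c'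
    have htri : dist x x' ≤ dist x c' + dist c' x' := dist_triangle _ _ _
    rw [dist_comm c' x'] at htri
    have e1 : dist x c' = r := by linarith [hxx' ▸ htri]
    have e2 : dist x' c' = r := by linarith [hxx' ▸ htri]
    have := eq_midpoint_of_dist_eq_half (x := x) (y := c') (z := x')
      (by rw [hxx']; linarith) (by rw [dist_comm, hxx']; linarith)
    rw [this, hmid]
  refine ⟨?_, huniq⟩
  constructor
  · exact subset_closure ⟨c, hQc, Metric.mem_closedBall.mpr hx'c.le⟩
  · -- not in interior
    intro hint
    rw [mem_interior_iff_mem_nhds, Metric.mem_nhds_iff] at hint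
    obtain ⟨ε, hε, hsub⟩ := hint
    set y := x' + (ε / (2 * r)) • (x' - c) with hy
    have hyx' : dist y x' = ε / 2 := by
      rw [dist_eq_norm, hy]
      have : x' + (ε / (2 * r)) • (x' - c) - x' = (ε / (2 * r)) • (x' - c) := by module
      rw [this, norm_smul]
      rw [show ‖x' - c‖ = r from (dist_eq_norm x' c ▸ hx'c), Real.norm_of_nonneg (by positivity)]
      field_simp
    have hymem : y ∈ Metric.ball x' ε := by
      rw [Metric.mem_ball, hyx']; linarith
    obtain ⟨c', hQ', hyc'⟩ := hsub hymem
    have h1 : dist x c' ≤ r := hx c' hQ'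
    have hxy : dist x y = 2 * r + ε / 2 := by
      have hcol : y - x = (2 + ε / (2 * r)) • (c - x) := by
        rw [hy, hx']; module
      rw [dist_eq_norm, show x - y = -(y - x) by module, norm_neg, hcol, norm_smul,
        Real.norm_of_nonneg (by positivity), ← dist_eq_norm, dist_comm, hxc]
      field_simp
    have := dist_triangle x c' y
    rw [dist_comm c' y] at this
    have : dist x y ≤ 2 * r := by linarith [Metric.mem_closedBall.mp hyc']
    linarith [hxy ▸ this]
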